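/- Let L be a subgroup of F₂ × F₂ such that the kernel of the first coordinate projection restricted to L is infinite cyclic and the image of L under the first projection is free. Then L is isomorphic to ℤ × F for a free group F. -/

import Mathlib

set_option linter.unusedSectionVars false
namespace ConjInvAux

open FreeGroup List

variable {α : Type*} [DecidableEq α]

/-- inverse of a letter -/
def linv (x : α × Bool) : α × Bool := (x.1, !x.2)

@[simp] lemma linv_linv (x : α × Bool) : linv (linv x) = x := by
  cases x with | mk a b => simp [linv]

lemma linv_eq_iff {x y : α × Bool} : x = linv y ↔ y = linv x := by
  constructor <;> rintro rfl <;> simp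

/-- reducedness of a word -/
def IsRed (w : List (α × Bool)) : Prop := w.IsChain fun x y => y ≠ linv x

lemma isRed_nil : IsRed ([] : List (α × Bool)) := List.isChain_nil

lemma isRed_singleton (x : α × Bool) : IsRed [x] := List.isChain_singleton x

lemma cancel_iff {x y : α × Bool} : (x.1 = y.1 ∧ x.2 = !y.2) ↔ y = linv x := by
  cases x with | mk a b => cases y with | mk c d =>
    simp only [linv, Prod.mk.injEq]
    cases b <;> cases d <;> simp <;> exact eq_comm

lemma reduce_eq_self {w : List (α × Bool)} (h : IsRed w) : reduce w = w := by
  induction w with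
  | nil => rfl
  | cons x t ih =>
    have ht : IsRed t := h.tail
    rw [reduce.cons, ih ht]
    cases t with
    | nil => rfl
    | cons hd tl =>
      have hx : hd ≠ linv x := (List.isChain_cons_cons.1 h).1
      show (if x.1 = hd.1 ∧ x.2 = !hd.2 then tl else x :: hd :: tl) = x :: hd :: tl
      rw [if_neg]
      intro hc
      exact hx (cancel_iff.1 hc)

lemma isRed_reduce (w : List (α × Bool)) : IsRed (reduce w) := by
  induction w with
  | nil => exact isRed_nil
  | cons x t ih =>
    rw [reduce.cons]
    rcases hr : reduce t with _ | ⟨hd, tl⟩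
    · exact isRed_singleton x
    · rw [hr] at ih
      by_cases hc : x.1 = hd.1 ∧ x.2 = !hd.2
      · simp only [if_pos hc]; exact ih.tail
      · simp only [if_neg hc]
        exact List.isChain_cons_cons.2 ⟨fun h => hc (cancel_iff.2 h), ih⟩

lemma toWord_mk_red {w : List (α × Bool)} (h : IsRed w) : (mk w).toWord = w := by
  rw [toWord_mk, reduce_eq_self h]

lemma isRed_toWord (x : FreeGroup α) : IsRed x.toWord := by
  rw [← mk_toWord (x := x), toWord_mk]
  exact isRed_reduce _

lemma norm_mk_red {w : List (α × Bool)} (h : IsRed w) : (mk w).norm = w.length := by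
  unfold FreeGroup.norm
  rw [toWord_mk_red h]

lemma invRev_append (u v : List (α × Bool)) : invRev (u ++ v) = invRev v ++ invRev u := by
  simp [invRev]

lemma invRev_singleton (x : α × Bool) : invRev [x] = [linv x] := rfl

lemma invRev_length' (w : List (α × Bool)) : (invRev w).length = w.length := by
  simp [invRev]

lemma isRed_invRev {w : List (α × Bool)} (h : IsRed w) : IsRed (invRev w) := by
  unfold IsRed invRev
  rw [List.isChain_reverse, List.isChain_map]
  refine h.imp ?_
  intro a b hab hc
  apply hab
  have h2 : linv ((a.1, !a.2)) = linv (linv (b.1, !b.2)) := by rw [hc]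
  simp only [linv_linv] at h2
  have : linv (a.1, !a.2) = a := by simp [linv]
  rw [this] at h2
  exact linv_eq_iff.1 h2


/-- a reduced word equal to its own formal inverse is empty -/
lemma pal : ∀ n (w : List (α × Bool)), w.length ≤ n → IsRed w → invRev w = w → w = [] := by
  intro n
  induction n with
  | zero => intro w hw _ _; exact List.length_eq_zero_iff.1 (Nat.le_zero.1 hw)
  | succ n ih =>
    intro w hw hred hinv
    rcases w with _ | ⟨x, t⟩
    · rfl
    rcases ht : t with _ | ⟨y, t'⟩
    · exfalso
      subst ht
      rw [invRev_singleton] at hinv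
      have : linv x = x := by injection hinv
      cases x with | mk a b => cases b <;> simp [linv] at this
    subst ht
    have htne : (y :: t') ≠ [] := List.cons_ne_nil _ _
    set t : List (α × Bool) := y :: t' with ht
    have hdec : x :: t = [x] ++ t.dropLast ++ [t.getLast htne] := by
      rw [List.append_assoc, List.singleton_append]
      rw [List.cons.injEq]
      refine ⟨rfl, ?_⟩
      exact (List.dropLast_append_getLast htne).symm
    set m := t.dropLast with hm
    set z := t.getLast htne with hz2
    have hinv2 : [linv z] ++ invRev m ++ [linv x] = [x] ++ m ++ [z] := by
      have := hinv
      rw [hdec] at this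
      rw [invRev_append, invRev_append, invRev_singleton, invRev_singleton] at this
      simpa [List.append_assoc] using this
    have hxz : linv z = x := by injection hinv2
    have hrest : invRev m ++ [linv x] = m ++ [z] := by injection hinv2
    have hmlen : (invRev m).length = m.length := invRev_length' m
    obtain ⟨hm2, hlast⟩ := List.append_inj hrest hmlen
    -- m is reduced: it is an infix of w
    have hmred : IsRed m := hred.infix ⟨[x], [z], by simp [hdec]⟩
    have hmlen2 : m.length ≤ n := by
      have h5 : (x :: t).length = m.length + 2 := by rw [hdec]; simp
      have := hw
      omega
    have hmnil : m = [] := ih m hmlen2 hmred hm2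
    -- then w = [x, z] with x = linv z, contradicting reducedness
    exfalso
    rw [hdec, hmnil] at hred
    have : z ≠ linv x := (List.isChain_cons_cons.1 hred).1
    exact this (by rw [← hxz]; simp)

/-- rotation relation on words -/
def Rot (u v : List (α × Bool)) : Prop := ∃ s t, u = s ++ t ∧ v = t ++ s

lemma rot_refl (u : List (α × Bool)) : Rot u u := ⟨u, [], by simp, by simp⟩

lemma rot_trans {a b c : List (α × Bool)} (h1 : Rot a b) (h2 : Rot b c) : Rot a c := by
  obtain ⟨s, t, rfl, rfl⟩ := h1
  obtain ⟨u, v, huv, rfl⟩ := h2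
  rcases List.append_eq_append_iff.1 huv with ⟨a', ha1, ha2⟩ | ⟨c', hc1, hc2⟩
  · exact ⟨a', v ++ t, by rw [ha2]; simp, by rw [ha1]; simp⟩
  · exact ⟨s ++ u, c', by rw [hc1]; simp, by rw [hc2]; simp⟩

lemma rot_length {a b : List (α × Bool)} (h : Rot a b) : a.length = b.length := by
  obtain ⟨s, t, rfl, rfl⟩ := h; simp [Nat.add_comm]

lemma rot_invRev {a b : List (α × Bool)} (h : Rot a b) : Rot (invRev a) (invRev b) := by
  obtain ⟨s, t, rfl, rfl⟩ := h
  exact ⟨invRev t, invRev s, invRev_append s t, invRev_append t s⟩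

/-- cyclically reduced -/
def CycRed (w : List (α × Bool)) : Prop := IsRed (w ++ w)

lemma CycRed.isRed {w : List (α × Bool)} (h : CycRed w) : IsRed w :=
  List.IsChain.prefix h ⟨w, rfl⟩

lemma isRed_three {w : List (α × Bool)} (h : CycRed w) : IsRed (w ++ w ++ w) := by
  unfold CycRed IsRed at *
  rw [List.isChain_append] at h ⊢
  obtain ⟨h1, h2, h3⟩ := h
  refine ⟨List.isChain_append.2 ⟨h1, h1, h3⟩, h1, ?_⟩
  intro x hx y hy
  rcases w with _ | _
  · simp at hy
  · rw [List.getLast?_append_of_ne_nil _ (by simp)] at hx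
    exact h3 x hx y hy

lemma rot_cycRed {a b : List (α × Bool)} (h : Rot a b) (ha : CycRed a) : CycRed b := by
  obtain ⟨s, t, rfl, rfl⟩ := h
  have h3 := isRed_three ha
  refine List.IsChain.infix h3 ⟨s, t, ?_⟩
  simp

lemma cycRed_invRev {w : List (α × Bool)} (h : CycRed w) : CycRed (invRev w) := by
  unfold CycRed at *
  rw [← invRev_append]
  exact isRed_invRev h

lemma mk_singleton_inv (x : α × Bool) : (mk [x])⁻¹ = mk [linv x] := by
  rw [inv_mk, invRev_singleton]

lemma norm_toWord (z : FreeGroup α) : z.norm = z.toWord.length := rfl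

/-- expansion lemma: conjugating a reduced word that starts with `a` and ends in `a⁻¹`
by a reduced word not ending in `a⁻¹` gives no cancellation at all. -/
lemma lemE : ∀ n (v : List (α × Bool)), v.length = n → IsRed v →
    ∀ (e : List (α × Bool)) (a : α × Bool), IsRed e → e.head? = some a →
    e.getLast? = some (linv a) → (∀ x ∈ v.getLast?, x ≠ linv a) →
    (mk v * mk e * (mk v)⁻¹).norm = 2 * v.length + e.length := by
  intro n
  induction n with
  | zero =>
    intro v hv _ e a he _ _ _
    have : v = [] := List.length_eq_zero_iff.1 hv
    subst this
    simp only [← one_eq_mk, one_mul, inv_one, mul_one, List.length_nil, Nat.mul_zero,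
      Nat.zero_add]
    exact norm_mk_red he
  | succ n ihn =>
    intro v hv hvred e a he hhead hlast hcond
    have hvne : v ≠ [] := by intro hh; rw [hh] at hv; simp at hv
    set x := v.getLast hvne with hx
    set v₁ := v.dropLast with hv₁
    have hdec : v = v₁ ++ [x] := (List.dropLast_append_getLast hvne).symm
    have hxa : x ≠ linv a := hcond x (by rw [List.getLast?_eq_getLast hvne]; rfl)
    have hv₁red : IsRed v₁ := hvred.prefix ⟨[x], hdec.symm⟩
    have hv₁cond : ∀ p ∈ v₁.getLast?, p ≠ linv x := by
      intro p hp
      have hj := (List.isChain_append.1 (hdec ▸ hvred)).2.2 p hp x (by simp)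
      intro hcontra
      exact hj (linv_eq_iff.1 hcontra)
    have hene : e ≠ [] := by intro hh; rw [hh] at hhead; simp at hhead
    -- the new middle word
    set e' : List (α × Bool) := [x] ++ e ++ [linv x] with he'
    have he'red : IsRed e' := by
      unfold e'
      unfold IsRed
      rw [List.append_assoc, List.isChain_append]
      refine ⟨List.isChain_singleton x, ?_, ?_⟩
      · rw [List.isChain_append]
        refine ⟨he, List.isChain_singleton _, ?_⟩
        intro p hp q hq
        simp only [List.head?_cons, Option.mem_def, Option.some.injEq] at hq
        rw [hlast] at hp
        simp only [Option.mem_def, Option.some.injEq] at hp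
        subst hq; subst hp
        intro hcontra
        apply hxa
        have h9 := congrArg linv hcontra
        simpa using h9
      · intro p hp q hq
        simp only [List.getLast?_singleton, Option.mem_def, Option.some.injEq] at hp
        rw [List.head?_append_of_ne_nil _ hene, hhead] at hq
        simp only [Option.mem_def, Option.some.injEq] at hq
        subst hp; subst hq
        intro hcontra
        exact hxa (linv_eq_iff.1 hcontra)
    have he'head : e'.head? = some x := by unfold e'; simp
    have he'last : e'.getLast? = some (linv x) := by
      unfold e'
      rw [List.getLast?_concat]
    have he'len : e'.length = e.length + 2 := by unfold e'; simp
    have hv₁len : v₁.length = n := by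
      have : v.length = v₁.length + 1 := by rw [hdec]; simp
      omega
    -- algebra
    have halg : mk v * mk e * (mk v)⁻¹ = mk v₁ * mk e' * (mk v₁)⁻¹ := by
      rw [hdec, ← mul_mk, mul_inv_rev, mk_singleton_inv]
      unfold e'
      rw [← mul_mk, ← mul_mk]
      group
    rw [halg, ihn v₁ hv₁len hv₁red e' x he'red he'head he'last hv₁cond, he'len, hv]
    have : v.length = v₁.length + 1 := by rw [hdec]; simp
    omega

lemma main : ∀ N (z : FreeGroup α) (c d : List (α × Bool)),
    z.norm = N → CycRed c → c ≠ [] → Rot (invRev c) d → z * mk c * z⁻¹ = mk d → False := by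
  intro N
  induction N using Nat.strong_induction_on with
  | _ N ihN =>
    intro z c d hzn hc hcne hrot heq
    have hured : IsRed z.toWord := isRed_toWord z
    rcases hu : z.toWord with _ | ⟨w0, wt⟩
    · -- z = 1
      have hz1 : z = 1 := toWord_eq_nil_iff.1 hu
      rw [hz1, one_mul, inv_one, mul_one] at heq
      have hdred : CycRed d := rot_cycRed hrot (cycRed_invRev hc)
      have hcd : c = d := by
        have := congrArg toWord heq
        rwa [toWord_mk_red hc.isRed, toWord_mk_red hdred.isRed] at this
      obtain ⟨s, t, hst, hd⟩ := hrot
      rw [← hcd] at hd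
      -- c = t ++ s and invRev c = s ++ t
      rw [hd, invRev_append] at hst
      obtain ⟨hs, ht⟩ := List.append_inj hst (invRev_length' s)
      have hsred : IsRed s := hc.isRed.suffix ⟨t, hd.symm⟩
      have htred : IsRed t := hc.isRed.prefix ⟨s, hd.symm⟩
      have hs0 : s = [] := pal s.length s le_rfl hsred hs
      have ht0 : t = [] := pal t.length t le_rfl htred ht
      exact hcne (by rw [hd, hs0, ht0]; rfl)
    · -- z has last letter a
      have hune : z.toWord ≠ [] := by rw [hu]; simp
      set u := z.toWord with hudef
      set a := u.getLast hune with ha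
      set u₁ := u.dropLast with hu₁
      have hdec : u = u₁ ++ [a] := (List.dropLast_append_getLast hune).symm
      have hu₁red : IsRed u₁ := hured.prefix ⟨[a], hdec.symm⟩
      have hzdec : z = mk u₁ * mk [a] := by
        rw [mul_mk, ← hdec, hudef, mk_toWord]
      have hu₁norm : (mk u₁).norm = u₁.length := norm_mk_red hu₁red
      have hlt : u₁.length < N := by
        have h8 : z.norm = u.length := rfl
        have h9 : u.length = u₁.length + 1 := by rw [hdec]; simp
        omega
      rcases hcc : c with _ | ⟨c₁, crest⟩
      · exact hcne hcc
      by_cases h1 : c₁ = linv a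
      · -- cancellation at the left junction
        set c₂ := crest ++ [c₁] with hc₂
        have hkey : mk [a] * mk c * (mk [a])⁻¹ = mk c₂ := by
          rw [hcc]
          have : (c₁ :: crest : List (α × Bool)) = [c₁] ++ crest := rfl
          rw [this, ← mul_mk, mk_singleton_inv]
          rw [h1]
          have h2 : mk [a] * mk [linv a] = 1 := by
            rw [← mk_singleton_inv, mul_inv_cancel]
          calc mk [a] * (mk [linv a] * mk crest) * mk [linv a]
              = (mk [a] * mk [linv a]) * (mk crest * mk [linv a]) := by group
            _ = mk crest * mk [linv a] := by rw [h2, one_mul]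
            _ = mk c₂ := by rw [mul_mk, hc₂, h1]
        have hrotc : Rot c c₂ := ⟨[c₁], crest, by rw [hcc]; rfl, rfl⟩
        have heq2 : mk u₁ * mk c₂ * (mk u₁)⁻¹ = mk d := by
          rw [← hkey, ← heq, hzdec]
          group
        have hrot2 : Rot (invRev c₂) d := by
          apply rot_trans _ hrot
          refine rot_trans ⟨[linv c₁], invRev crest, ?_, ?_⟩ (rot_refl _)
          · rw [hc₂, invRev_append, invRev_singleton]
          · rw [hcc]
            have : (c₁ :: crest : List (α × Bool)) = [c₁] ++ crest := rfl
            rw [this, invRev_append, invRev_singleton]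
        exact ihN u₁.length hlt (mk u₁) c₂ d hu₁norm (rot_cycRed hrotc hc)
          (by simp [hc₂]) hrot2 heq2
      · by_cases h2 : c.getLast (by rw [hcc]; simp) = a
        · -- cancellation at the right junction
          set cinit := c.dropLast with hcinit
          have hcd2 : c = cinit ++ [a] := by
            rw [← h2]
            exact (List.dropLast_append_getLast _).symm
          set c₂ := a :: cinit with hc₂
          have hkey : mk [a] * mk c * (mk [a])⁻¹ = mk c₂ := by
            rw [hcd2, ← mul_mk, mk_singleton_inv]
            have h3 : mk [a] * mk [linv a] = 1 := by
              rw [← mk_singleton_inv, mul_inv_cancel]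
            calc mk [a] * (mk cinit * mk [a]) * mk [linv a]
                = (mk [a] * mk cinit) * (mk [a] * mk [linv a]) := by group
              _ = mk [a] * mk cinit := by rw [h3, mul_one]
              _ = mk c₂ := by rw [mul_mk]; rfl
          have hrotc : Rot c c₂ := ⟨cinit, [a], hcd2, rfl⟩
          have heq2 : mk u₁ * mk c₂ * (mk u₁)⁻¹ = mk d := by
            rw [← hkey, ← heq, hzdec]
            group
          have hrot2 : Rot (invRev c₂) d := by
            apply rot_trans _ hrot
            refine ⟨invRev cinit, [linv a], ?_, ?_⟩
            · have : (c₂ : List (α × Bool)) = [a] ++ cinit := rfl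
              rw [this, invRev_append, invRev_singleton]
            · rw [hcd2, invRev_append, invRev_singleton]
          exact ihN u₁.length hlt (mk u₁) c₂ d hu₁norm (rot_cycRed hrotc hc)
            (by simp [hc₂]) hrot2 heq2
        · -- no cancellation: length grows, contradiction
          set e : List (α × Bool) := [a] ++ c ++ [linv a] with he
          have hcne' : c ≠ [] := by rw [hcc]; simp
          have hered : IsRed e := by
            unfold e
            unfold IsRed
            rw [List.append_assoc, List.isChain_append]
            refine ⟨List.isChain_singleton a, ?_, ?_⟩
            · rw [List.isChain_append]
              refine ⟨hc.isRed, List.isChain_singleton _, ?_⟩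
              intro p hp q hq
              simp only [List.head?_cons, Option.mem_def, Option.some.injEq] at hq
              rw [List.getLast?_eq_getLast hcne'] at hp
              simp only [Option.mem_def, Option.some.injEq] at hp
              subst hq; subst hp
              intro hcontra
              apply h2
              have := congrArg linv hcontra
              simpa using this.symm
            · intro p hp q hq
              simp only [List.getLast?_singleton, Option.mem_def, Option.some.injEq] at hp
              rw [List.head?_append_of_ne_nil _ hcne'] at hq
              rw [hcc] at hq
              simp only [List.head?_cons, Option.mem_def, Option.some.injEq] at hq
              subst hp; subst hq
              intro hcontra
              exact h1 hcontra
          have hehead : e.head? = some a := by unfold e; simp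
          have helast : e.getLast? = some (linv a) := by
            unfold e; rw [List.getLast?_concat]
          have hu₁cond : ∀ p ∈ u₁.getLast?, p ≠ linv a := by
            intro p hp
            have hj := (List.isChain_append.1 (hdec ▸ hured)).2.2 p hp a (by simp)
            intro hcontra
            exact hj (linv_eq_iff.1 hcontra)
          have halg : mk u₁ * mk e * (mk u₁)⁻¹ = mk d := by
            rw [← heq, hzdec]
            unfold e
            rw [← mul_mk, ← mul_mk, mul_inv_rev, mk_singleton_inv]
            group
          have hnorm := lemE u₁.length u₁ rfl hu₁red e a hered hehead helast hu₁cond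
          rw [halg] at hnorm
          have hlen : d.length = c.length := by
            rw [← rot_length hrot, invRev_length']
          have hle : (mk d).norm ≤ d.length := norm_mk_le
          have helen : e.length = c.length + 2 := by unfold e; simp
          omega

lemma cycred_decomp : ∀ n (b : FreeGroup α), b.norm = n →
    ∃ (p : FreeGroup α) (c : List (α × Bool)),
      CycRed c ∧ b = p * mk c * p⁻¹ ∧ (c = [] → b = 1) := by
  intro n
  induction n using Nat.strong_induction_on with
  | _ n ihn =>
    intro b hbn
    set w := b.toWord with hw
    have hwred : IsRed w := isRed_toWord b
    by_cases hcyc : CycRed w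
    · refine ⟨1, w, hcyc, by simp [hw, mk_toWord], ?_⟩
      intro hc
      exact toWord_eq_nil_iff.1 (by rw [← hw, hc])
    · have hwne : w ≠ [] := by
        intro hh
        apply hcyc
        rw [hh]
        exact isRed_nil
      -- junction failure
      have hjunc : w.head hwne = linv (w.getLast hwne) := by
        by_contra hj
        apply hcyc
        unfold CycRed IsRed
        rw [List.isChain_append]
        refine ⟨hwred, hwred, ?_⟩
        intro p hp q hq
        rw [List.getLast?_eq_getLast hwne] at hp
        rw [List.head?_eq_head hwne] at hq
        simp only [Option.mem_def, Option.some.injEq] at hp hq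
        subst hp; subst hq
        exact hj
      rcases hwc : w with _ | ⟨x, t⟩
      · exact absurd hwc hwne
      rcases htc : t with _ | ⟨y, t'⟩
      · exfalso
        subst htc
        have hh : some (w.head hwne) = some x := by
          rw [← List.head?_eq_head hwne, hwc]; rfl
        have hl : some (w.getLast hwne) = some x := by
          rw [← List.getLast?_eq_getLast hwne, hwc]; rfl
        have hh2 : w.head hwne = x := by injection hh
        have hl2 : w.getLast hwne = x := by injection hl
        rw [hh2, hl2] at hjunc
        cases x with | mk p q => cases q <;> simp [linv] at hjunc
      have htne : t ≠ [] := by rw [htc]; simp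
      set m := t.dropLast with hm
      set zl := t.getLast htne with hzl
      have hdect : t = m ++ [zl] := (List.dropLast_append_getLast htne).symm
      have hdec : w = [x] ++ m ++ [zl] := by
        rw [hwc, List.append_assoc, List.singleton_append, List.cons.injEq]
        exact ⟨rfl, hdect⟩
      have hxzl : x = linv zl := by
        have hh : w.head hwne = x := by
          have := congrArg (fun l => l.head?) hwc
          simp only [List.head?_eq_head hwne, List.head?_cons] at this
          injection this
        have hl : w.getLast hwne = zl := by
          have h1 := List.getLast?_eq_getLast hwne
          have h2 : w.getLast? = some zl := by
            rw [hwc, htc, List.getLast?_cons_cons, ← htc, List.getLast?_eq_getLast htne]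
          rw [h1] at h2
          injection h2
        rw [hh, hl] at hjunc
        exact hjunc
      have hmle : (mk m).norm < n := by
        have h1 : (mk m).norm ≤ m.length := norm_mk_le
        have h2 : w.length = m.length + 2 := by rw [hdec]; simp
        have h3 : b.norm = w.length := rfl
        omega
      obtain ⟨p, c, hcyc2, hdec2, hone2⟩ := ihn (mk m).norm hmle (mk m) rfl
      have hb : b = mk [x] * mk m * (mk [x])⁻¹ := by
        rw [mk_singleton_inv]
        have hlx : linv x = zl := by rw [hxzl, linv_linv]
        rw [hlx, mul_mk, mul_mk, ← hdec]
        exact mk_toWord.symm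
      refine ⟨mk [x] * p, c, hcyc2, ?_, ?_⟩
      · rw [hb, hdec2, mul_inv_rev]
        group
      · intro hc
        rw [hb, hone2 hc, mul_one, mul_inv_cancel]

/-- In a free group, no nontrivial element is conjugate to its inverse. -/
theorem conj_inv_eq_one (y b : FreeGroup α) (h : y * b * y⁻¹ = b⁻¹) : b = 1 := by
  obtain ⟨p, c, hc, hdec, hone⟩ := cycred_decomp b.norm b rfl
  by_cases hcne : c = []
  · exact hone hcne
  exfalso
  have hmc : p⁻¹ * b * p = mk c := by rw [hdec]; group
  have heq : (p⁻¹ * y * p) * mk c * (p⁻¹ * y * p)⁻¹ = mk (invRev c) := by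
    rw [← inv_mk, ← hmc]
    have h2 : (p⁻¹ * y * p) * (p⁻¹ * b * p) * (p⁻¹ * y * p)⁻¹ = p⁻¹ * (y * b * y⁻¹) * p := by
      group
    rw [h2, h]
    group
  exact main ((p⁻¹ * y * p).norm) _ c (invRev c) rfl hc hcne (rot_refl _) heq

end ConjInvAux

open ConjInvAux in

/-- If `L ≤ F₂ × F₂` is a subgroup such that the kernel of the first coordinate
projection restricted to `L` is infinite cyclic and the image of `L` under the
first projection is free, then `L ≅ ℤ × F` for some free group `F`. -/
theorem subgroup_of_F2_prod_F2_z_times_free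
    (L : Subgroup (FreeGroup (Fin 2) × FreeGroup (Fin 2)))
    (hker : Nonempty
      (((MonoidHom.fst (FreeGroup (Fin 2)) (FreeGroup (Fin 2))).comp
          L.subtype).ker ≃* Multiplicative ℤ))
    (himg : ∃ ι : Type, Nonempty
      ((L.map (MonoidHom.fst (FreeGroup (Fin 2)) (FreeGroup (Fin 2)))) ≃*
        FreeGroup ι)) :
    ∃ ι : Type, Nonempty (L ≃* (Multiplicative ℤ × FreeGroup ι)) := by
  classical
  obtain ⟨e⟩ := hker
  obtain ⟨ι, ⟨q⟩⟩ := himg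
  set F := FreeGroup (Fin 2) with hF
  set π : L →* F := (MonoidHom.fst F F).comp L.subtype with hπ
  set K := π.ker with hK
  set Q := L.map (MonoidHom.fst F F) with hQ
  set π' : L →* Q := π.codRestrict Q (fun x => Subgroup.mem_map.2 ⟨(x : F × F), x.2, rfl⟩)
    with hπ'
  have hπ'surj : Function.Surjective π' := by
    rintro ⟨g, x, hx, rfl⟩
    exact ⟨⟨x, hx⟩, rfl⟩
  have hπ'coe : ∀ x : L, (π' x : F) = π x := fun x => rfl
  have hkerπ' : ∀ x : L, π' x = 1 ↔ x ∈ K := by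
    intro x
    rw [hK, MonoidHom.mem_ker]
    constructor
    · intro h
      have := congrArg (fun z : Q => (z : F)) h
      simpa [hπ'coe] using this
    · intro h
      apply Subtype.ext
      simpa [hπ'coe] using h
  -- the generator of the kernel
  set k₀ : K := e.symm (Multiplicative.ofAdd 1) with hk₀
  have hek₀ : e k₀ = Multiplicative.ofAdd 1 := e.apply_symm_apply _
  have hk_pow : ∀ k : K, k = k₀ ^ (Multiplicative.toAdd (e k)) := by
    intro k
    apply e.injective
    rw [map_zpow, hek₀, ← ofAdd_zsmul, smul_eq_mul, mul_one, ofAdd_toAdd]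
  have hk₀fst : ((k₀ : L) : F × F).1 = 1 := by
    have := k₀.2
    rw [MonoidHom.mem_ker] at this
    exact this
  -- centrality of k₀ in L
  have hnormal : K.Normal := MonoidHom.normal_ker π
  have hcentral : ∀ x : L, x * (k₀ : L) * x⁻¹ = (k₀ : L) := by
    intro x
    have h1 : x * (k₀ : L) * x⁻¹ ∈ K := hnormal.conj_mem _ k₀.2 x
    have h2 : x⁻¹ * (k₀ : L) * x ∈ K := by
      have := hnormal.conj_mem _ k₀.2 x⁻¹
      simpa using this
    set k₂ : K := ⟨x * (k₀ : L) * x⁻¹, h1⟩ with hk₂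
    set k₁ : K := ⟨x⁻¹ * (k₀ : L) * x, h2⟩ with hk₁
    set m : ℤ := Multiplicative.toAdd (e k₂) with hm
    set n : ℤ := Multiplicative.toAdd (e k₁) with hn
    have hk₂p : k₂ = k₀ ^ m := hk_pow k₂
    have hk₁p : k₁ = k₀ ^ n := hk_pow k₁
    have e1 : (k₀ : L) = x * ((k₁ : L)) * x⁻¹ := by
      rw [hk₁]
      group
    have e2 : ((k₁ : L)) = ((k₀ : L)) ^ n := by
      rw [hk₁p]
      rfl
    have e4 : (k₀ : L) = ((k₂ : L)) ^ n := by
      rw [e1, e2, ← conj_zpow]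
    have e6 : ((k₂ : L)) = ((k₀ : L)) ^ m := by
      rw [hk₂p]
      rfl
    have e5 : (k₀ : L) = ((k₀ : L)) ^ (m * n) := by
      calc (k₀ : L) = ((k₂ : L)) ^ n := e4
        _ = (((k₀ : L)) ^ m) ^ n := by rw [e6]
        _ = ((k₀ : L)) ^ (m * n) := by rw [← zpow_mul]
    have hmn : m * n = 1 := by
      have h7 : k₀ = k₀ ^ (m * n) := Subtype.ext e5
      have h8 := congrArg e h7
      rw [map_zpow, hek₀, ← ofAdd_zsmul, smul_eq_mul, mul_one] at h8
      exact (Multiplicative.ofAdd.injective h8).symm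
    rcases Int.eq_one_or_neg_one_of_mul_eq_one hmn with hm1 | hm1
    · -- m = 1 : conjugation fixes k₀
      have : k₂ = k₀ := by rw [hk₂p, hm1, zpow_one]
      have := congrArg ((↑) : K → L) this
      rw [hk₂] at this
      exact this
    · -- m = -1 : conjugate of k₀ is its inverse, contradiction with free group
      exfalso
      have hconj : x * (k₀ : L) * x⁻¹ = ((k₀ : L))⁻¹ := by
        have : k₂ = k₀⁻¹ := by rw [hk₂p, hm1, zpow_neg_one]
        have := congrArg ((↑) : K → L) this
        rw [hk₂] at this
        push_cast at this
        exact this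
      have hG : ((x : F × F)) * ((k₀ : L) : F × F) * ((x : F × F))⁻¹
          = (((k₀ : L) : F × F))⁻¹ := by
        exact_mod_cast congrArg ((↑) : L → F × F) hconj
      have hsnd : ((x : F × F)).2 * ((k₀ : L) : F × F).2 * (((x : F × F)).2)⁻¹
          = ((((k₀ : L) : F × F)).2)⁻¹ := by
        exact congrArg Prod.snd hG
      have hb1 : ((k₀ : L) : F × F).2 = 1 := conj_inv_eq_one _ _ hsnd
      have hk₀1 : ((k₀ : L) : F × F) = 1 := by
        ext
        · rw [hk₀fst]; rfl
        · rw [hb1]; rfl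
      have : k₀ = 1 := Subtype.ext (Subtype.ext hk₀1)
      have h9 : Multiplicative.ofAdd (1:ℤ) = Multiplicative.ofAdd (0:ℤ) := by
        rw [← hek₀, this, map_one]
        rfl
      have h10 : (1 : ℤ) = 0 := Multiplicative.ofAdd.injective h9
      exact one_ne_zero h10
  -- all of K is central
  have hKcomm : ∀ (k : K) (x : L), Commute x (k : L) := by
    intro k x
    have hc0 : Commute x (k₀ : L) := by
      have h := hcentral x
      have : x * (k₀ : L) = (k₀ : L) * x := by
        have := congrArg (fun z => z * x) h
        simpa [mul_assoc] using this
      exact this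
    have : k = k₀ ^ (Multiplicative.toAdd (e k)) := hk_pow k
    rw [this]
    push_cast
    exact hc0.zpow_right _
  -- the splitting of π'
  have hchoice : ∀ i : ι, ∃ x : L, π' x = q.symm (FreeGroup.of i) :=
    fun i => hπ'surj (q.symm (FreeGroup.of i))
  choose sec hsec using hchoice
  set σ : FreeGroup ι →* L := FreeGroup.lift sec with hσdef
  have hσ : ∀ w : FreeGroup ι, π' (σ w) = q.symm w := by
    have hhom : π'.comp σ = q.symm.toMonoidHom := by
      apply FreeGroup.ext_hom
      intro i
      simp only [MonoidHom.comp_apply, hσdef, FreeGroup.lift_apply_of, MulEquiv.coe_toMonoidHom]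
      exact hsec i
    intro w
    exact DFunLike.congr_fun hhom w
  set s : Q →* L := σ.comp q.toMonoidHom with hsdef
  have hs : ∀ w : Q, π' (s w) = w := by
    intro w
    simp only [hsdef, MonoidHom.comp_apply, MulEquiv.coe_toMonoidHom]
    rw [hσ, MulEquiv.symm_apply_apply]
  -- the retraction onto K
  have hrmem : ∀ x : L, x * (s (π' x))⁻¹ ∈ K := by
    intro x
    rw [← hkerπ']
    rw [map_mul, map_inv, hs, mul_inv_cancel]
  set rfun : L → K := fun x => ⟨x * (s (π' x))⁻¹, hrmem x⟩ with hrfun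
  have hrmul : ∀ x y : L, rfun (x * y) = rfun x * rfun y := by
    intro x y
    apply Subtype.ext
    push_cast [hrfun]
    rw [map_mul π' x y, map_mul s (π' x) (π' y), mul_inv_rev]
    -- goal: x * y * ((s (π' y))⁻¹ * (s (π' x))⁻¹) = x * (s (π' x))⁻¹ * (y * (s (π' y))⁻¹)
    have hcy : Commute ((s (π' x))⁻¹) (y * (s (π' y))⁻¹) :=
      (hKcomm ⟨_, hrmem y⟩ (s (π' x))).inv_left
    calc x * y * ((s (π' y))⁻¹ * (s (π' x))⁻¹)
        = x * ((y * (s (π' y))⁻¹) * (s (π' x))⁻¹) := by group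
      _ = x * ((s (π' x))⁻¹ * (y * (s (π' y))⁻¹)) := by rw [hcy.symm.eq]
      _ = x * (s (π' x))⁻¹ * (y * (s (π' y))⁻¹) := by group
  set rhom : L →* K :=
    { toFun := rfun
      map_one' := by
        apply Subtype.ext
        simp [hrfun]
      map_mul' := hrmul } with hrhom
  -- the isomorphism
  set φ : L →* Multiplicative ℤ × FreeGroup ι :=
    MonoidHom.prod (e.toMonoidHom.comp rhom) (q.toMonoidHom.comp π') with hφ
  have hinj : Function.Injective φ := by
    rw [injective_iff_map_eq_one]
    intro x hx
    rw [hφ, Prod.ext_iff] at hx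
    obtain ⟨hx1, hx2⟩ := hx
    simp only [MonoidHom.prod_apply, MonoidHom.comp_apply, MulEquiv.coe_toMonoidHom,
      Prod.fst_one, Prod.snd_one] at hx1 hx2
    have hq1 : π' x = 1 := by
      apply q.injective
      rw [hx2, map_one]
    have hr1 : rhom x = 1 := by
      apply e.injective
      rw [hx1, map_one]
    have : (rhom x : L) = x := by
      show x * (s (π' x))⁻¹ = x
      rw [hq1, map_one, inv_one, mul_one]
    rw [hr1] at this
    exact this.symm ▸ rfl
  have hsurj : Function.Surjective φ := by
    rintro ⟨mz, w⟩
    refine ⟨((e.symm mz : K) : L) * s (q.symm w), ?_⟩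
    have hπ'x : π' (((e.symm mz : K) : L) * s (q.symm w)) = q.symm w := by
      rw [map_mul, hs]
      have : π' ((e.symm mz : K) : L) = 1 := (hkerπ' _).2 (e.symm mz).2
      rw [this, one_mul]
    rw [hφ]
    apply Prod.ext
    · simp only [MonoidHom.prod_apply, MonoidHom.comp_apply, MulEquiv.coe_toMonoidHom]
      have : rhom (((e.symm mz : K) : L) * s (q.symm w)) = e.symm mz := by
        apply Subtype.ext
        show (((e.symm mz : K) : L) * s (q.symm w)) * (s (π' _))⁻¹ = ((e.symm mz : K) : L)
        rw [hπ'x, mul_inv_cancel_right]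
      rw [this, MulEquiv.apply_symm_apply]
    · simp only [MonoidHom.prod_apply, MonoidHom.comp_apply, MulEquiv.coe_toMonoidHom]
      rw [hπ'x, MulEquiv.apply_symm_apply]
  exact ⟨ι, ⟨MulEquiv.ofBijective φ ⟨hinj, hsurj⟩⟩⟩
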